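/- For any positive integer k and complex number z with |z| ≤ 1 and Re(z) ≤ 0, the truncated Taylor series T_k(z) = ∑_{j=0}^k z^j/j! satisfies |T_k(z)| ≤ 1 + 1/(k+1)!. -/

import Mathlib

open intervalIntegral in
open Finset in
theorem taylor_trunc_bound (k : ℕ) (hk : 0 < k) (z : ℂ)
    (hz : ‖z‖ ≤ 1) (hre : z.re ≤ 0) :
    ‖∑ j ∈ Finset.range (k + 1), z ^ j / (Nat.factorial j : ℂ)‖ ≤
      1 + 1 / (Nat.factorial (k + 1) : ℝ) := by
  have hOfReal : ∀ t : ℝ, HasDerivAt (fun t : ℝ => (t : ℂ)) 1 t := by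
    intro t
    simpa using (hasDerivAt_id t).ofReal_comp
  have key : ∀ t : ℝ, HasDerivAt
      (fun t : ℝ => Complex.exp (t * z) *
        ∑ j ∈ Finset.range (k + 1), (z * (1 - (t:ℂ))) ^ j / (Nat.factorial j : ℂ))
      (z ^ (k+1) * (1 - (t:ℂ)) ^ k * Complex.exp (t * z) / (Nat.factorial k : ℂ)) t := by
    intro t
    have hexp : HasDerivAt (fun t : ℝ => Complex.exp ((t:ℂ) * z))
        (Complex.exp ((t:ℂ) * z) * z) t := by
      simpa using ((hOfReal t).mul_const z).cexp
    have hterm : ∀ j : ℕ, HasDerivAt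
        (fun t : ℝ => (z * (1 - (t:ℂ))) ^ j / (Nat.factorial j : ℂ))
        ((j:ℂ) * (z * (1 - (t:ℂ))) ^ (j - 1) * (-z) / (Nat.factorial j : ℂ)) t := by
      intro j
      have hC : HasDerivAt (fun s : ℂ => (z * (1 - s)) ^ j / (Nat.factorial j : ℂ))
          ((j:ℂ) * (z * (1 - (t:ℂ))) ^ (j - 1) * (-z) / (Nat.factorial j : ℂ)) ((t:ℝ):ℂ) := by
        have hb : HasDerivAt (fun s : ℂ => z * (1 - s)) (-z) ((t:ℝ):ℂ) := by
          simpa using ((hasDerivAt_id ((t:ℝ):ℂ)).const_sub 1).const_mul z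
        simpa using (hb.pow j).div_const ((Nat.factorial j : ℂ))
      exact hC.comp_ofReal
    have hS := HasDerivAt.fun_sum (fun j (_ : j ∈ Finset.range (k+1)) => hterm j)
    have hg := hexp.mul hS
    have hsum' : ∑ j ∈ Finset.range (k+1),
        (j:ℂ) * (z * (1 - (t:ℂ))) ^ (j - 1) * (-z) / (Nat.factorial j : ℂ)
        = -z * ∑ j ∈ Finset.range k, (z * (1 - (t:ℂ))) ^ j / (Nat.factorial j : ℂ) := by
      rw [Finset.sum_range_succ']
      simp only [Nat.cast_zero, Nat.factorial_zero, Nat.cast_one, pow_zero]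
      rw [Finset.mul_sum]
      simp only [zero_mul, zero_div, add_zero]
      refine Finset.sum_congr rfl fun j _ => ?_
      have hfac : (Nat.factorial (j+1) : ℂ) = (j+1) * Nat.factorial j := by
        push_cast [Nat.factorial_succ]; ring
      have hne : ((j:ℂ)+1) ≠ 0 := Nat.cast_add_one_ne_zero j
      have hfne : (Nat.factorial j : ℂ) ≠ 0 := by
        exact_mod_cast Nat.cast_ne_zero.mpr (Nat.factorial_ne_zero j)
      simp only [Nat.add_sub_cancel]
      rw [hfac]
      push_cast
      field_simp
    have halg : Complex.exp ((t:ℂ) * z) * z *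
          (∑ j ∈ Finset.range (k+1), (z * (1 - (t:ℂ))) ^ j / (Nat.factorial j : ℂ)) +
        Complex.exp ((t:ℂ) * z) *
          ∑ j ∈ Finset.range (k+1),
            (j:ℂ) * (z * (1 - (t:ℂ))) ^ (j - 1) * (-z) / (Nat.factorial j : ℂ)
        = z ^ (k+1) * (1 - (t:ℂ)) ^ k * Complex.exp ((t:ℂ) * z) / (Nat.factorial k : ℂ) := by
      rw [hsum', Finset.sum_range_succ, mul_pow]
      ring
    exact halg ▸ hg
  -- FTC
  have hcont : Continuous (fun t : ℝ =>
      z ^ (k+1) * (1 - (t:ℂ)) ^ k * Complex.exp ((t:ℂ) * z) / (Nat.factorial k : ℂ)) := by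
    fun_prop
  have hFTC := intervalIntegral.integral_eq_sub_of_hasDerivAt
      (f := fun t : ℝ => Complex.exp ((t:ℂ) * z) *
        ∑ j ∈ Finset.range (k + 1), (z * (1 - (t:ℂ))) ^ j / (Nat.factorial j : ℂ))
      (a := 0) (b := 1)
      (fun t _ => key t) (hcont.intervalIntegrable 0 1)
  have hg1 : Complex.exp ((1:ℝ) * z) *
      ∑ j ∈ Finset.range (k + 1), (z * (1 - ((1:ℝ):ℂ))) ^ j / (Nat.factorial j : ℂ)
      = Complex.exp z := by
    have : ∑ j ∈ Finset.range (k + 1), (z * (1 - ((1:ℝ):ℂ))) ^ j / (Nat.factorial j : ℂ) = 1 := by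
      rw [Finset.sum_eq_single 0]
      · simp
      · intro j _ hj
        simp [zero_pow hj]
      · simp
    rw [this]; simp
  have hg0 : Complex.exp ((0:ℝ) * z) *
      ∑ j ∈ Finset.range (k + 1), (z * (1 - ((0:ℝ):ℂ))) ^ j / (Nat.factorial j : ℂ)
      = ∑ j ∈ Finset.range (k + 1), z ^ j / (Nat.factorial j : ℂ) := by
    simp
  beta_reduce at hFTC
  rw [hg1, hg0] at hFTC
  -- bound the integral
  have hbound : ‖∫ t in (0:ℝ)..1,
      z ^ (k+1) * (1 - (t:ℂ)) ^ k * Complex.exp ((t:ℂ) * z) / (Nat.factorial k : ℂ)‖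
      ≤ 1 / (Nat.factorial (k+1) : ℝ) := by
    have hle : ∀ t ∈ Set.Icc (0:ℝ) 1,
        ‖z ^ (k+1) * (1 - (t:ℂ)) ^ k * Complex.exp ((t:ℂ) * z) / (Nat.factorial k : ℂ)‖
        ≤ (1 - t) ^ k / (Nat.factorial k : ℝ) := by
      intro t ht
      obtain ⟨ht0, ht1⟩ := ht
      have habs1 : ‖z ^ (k+1)‖ ≤ 1 := by
        rw [norm_pow]
        exact pow_le_one₀ (norm_nonneg z) hz
      have habs2 : ‖(1 - (t:ℂ)) ^ k‖ = (1 - t) ^ k := by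
        rw [norm_pow]
        congr 1
        rw [show (1 - (t:ℂ)) = (((1 - t : ℝ)):ℂ) by push_cast; ring,
          Complex.norm_real, Real.norm_eq_abs, abs_of_nonneg (by linarith)]
      have habs3 : ‖Complex.exp ((t:ℂ) * z)‖ ≤ 1 := by
        rw [Complex.norm_exp]
        apply Real.exp_le_one_iff.mpr
        have : ((t:ℂ) * z).re = t * z.re := by simp
        rw [this]
        exact mul_nonpos_of_nonneg_of_nonpos ht0 hre
      have habs4 : ‖(Nat.factorial k : ℂ)‖ = (Nat.factorial k : ℝ) := by
        simp [Complex.norm_natCast]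
      rw [show ‖z ^ (k+1) * (1 - (t:ℂ)) ^ k * Complex.exp ((t:ℂ) * z) / (Nat.factorial k : ℂ)‖
        = ‖z ^ (k+1)‖ * ‖(1 - (t:ℂ)) ^ k‖ *
          ‖Complex.exp ((t:ℂ) * z)‖ / ‖(Nat.factorial k : ℂ)‖ by
          simp [norm_div, norm_mul]]
      rw [habs2, habs4]
      rw [div_le_div_iff_of_pos_right (by positivity)]
      calc ‖z ^ (k+1)‖ * (1 - t) ^ k * ‖Complex.exp ((t:ℂ) * z)‖
          ≤ 1 * (1 - t) ^ k * 1 := by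
            have h1t : (0:ℝ) ≤ (1 - t) ^ k := pow_nonneg (by linarith) k
            apply mul_le_mul (mul_le_mul habs1 le_rfl h1t (by norm_num)) habs3
              (norm_nonneg _) (by nlinarith)
        _ = (1 - t) ^ k := by ring
    have hval : (∫ t in (0:ℝ)..1, (1 - t) ^ k / (Nat.factorial k : ℝ))
        = 1 / (Nat.factorial (k+1) : ℝ) := by
      rw [intervalIntegral.integral_div]
      have : ∫ t in (0:ℝ)..1, (1 - t) ^ k = 1 / (k + 1 : ℝ) := by
        rw [show (fun t : ℝ => (1 - t) ^ k) = (fun t : ℝ => ((fun s : ℝ => s ^ k) (1 - t))) from rfl,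
          intervalIntegral.integral_comp_sub_left (fun s : ℝ => s ^ k) 1]
        simp [integral_pow]
      rw [this, Nat.factorial_succ]
      push_cast
      rw [div_div]
    calc ‖∫ t in (0:ℝ)..1,
          z ^ (k+1) * (1 - (t:ℂ)) ^ k * Complex.exp ((t:ℂ) * z) / (Nat.factorial k : ℂ)‖
        ≤ |∫ t in (0:ℝ)..1, (1 - t) ^ k / (Nat.factorial k : ℝ)| := by
          apply intervalIntegral.norm_integral_le_abs_of_norm_le
          · filter_upwards [MeasureTheory.ae_restrict_mem measurableSet_Ioc] with t ht
            have ht' : t ∈ Set.Icc (0:ℝ) 1 := by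
              rw [Set.uIoc_of_le (by norm_num : (0:ℝ) ≤ 1)] at ht
              exact ⟨le_of_lt ht.1, ht.2⟩
            exact hle t ht'
          · apply Continuous.intervalIntegrable
            fun_prop
      _ = 1 / (Nat.factorial (k+1) : ℝ) := by
          rw [hval, abs_of_nonneg (by positivity)]
  -- combine
  have habs_exp : ‖Complex.exp z‖ ≤ 1 := by
    rw [Complex.norm_exp]
    exact Real.exp_le_one_iff.mpr hre
  have heq : (∑ j ∈ Finset.range (k + 1), z ^ j / (Nat.factorial j : ℂ))
      = Complex.exp z - ∫ t in (0:ℝ)..1,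
        z ^ (k+1) * (1 - (t:ℂ)) ^ k * Complex.exp ((t:ℂ) * z) / (Nat.factorial k : ℂ) := by
    rw [hFTC]; ring
  rw [heq]
  calc ‖Complex.exp z - ∫ t in (0:ℝ)..1,
        z ^ (k+1) * (1 - (t:ℂ)) ^ k * Complex.exp ((t:ℂ) * z) / (Nat.factorial k : ℂ)‖
      ≤ ‖Complex.exp z‖ + ‖∫ t in (0:ℝ)..1,
        z ^ (k+1) * (1 - (t:ℂ)) ^ k * Complex.exp ((t:ℂ) * z) / (Nat.factorial k : ℂ)‖ :=
        norm_sub_le _ _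
    _ ≤ 1 + 1 / (Nat.factorial (k+1) : ℝ) := add_le_add habs_exp hbound
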